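/- Let n ≥ 1, λ, μ > 0, ρ = λ/μ. Suppose real numbers v_0, v_1, …, v_n satisfy: (i) v_1 = 1/(nλ); (ii) for each 2 ≤ i ≤ n, ((n-i+1)λ + (i-1)μ) v_i = 1 + μ ∑_{j=1}^{i-1} v_j + λ(n-i+1) v_{i-1}; and (iii) v_0 = 1/(nμ) + (1/n) ∑_{j=1}^{n} v_j. Then v_0 = (1/μ)[ (1/(nρ)) ∑_{j=1}^{n-1} ∏_{i=1}^{j} ( ρ(n-i+1)/(i + (n-i)ρ) ) + 1/(nρ) + (1/n^2) ∏_{i=1}^{n-1} ( ρ(n-i+1)/(i + (n-i)ρ) ) ]. -/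

import Mathlib

private noncomputable def PP (n : ℕ) (rho : ℝ) (j : ℕ) : ℝ :=
  ∏ i ∈ Finset.Icc 1 j, rho * ((n : ℝ) - (i : ℝ) + 1) / ((i : ℝ) + ((n : ℝ) - (i : ℝ)) * rho)

private lemma PP_zero (n : ℕ) (rho : ℝ) : PP n rho 0 = 1 := by simp [PP]

private lemma PP_succ (n : ℕ) (rho : ℝ) (m : ℕ) :
    PP n rho (m + 1) = PP n rho m *
      (rho * ((n : ℝ) - ((m : ℝ) + 1) + 1) / (((m : ℝ) + 1) + ((n : ℝ) - ((m : ℝ) + 1)) * rho)) := by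
  rw [PP, PP, Finset.prod_Icc_succ_top (Nat.succ_le_succ (Nat.zero_le m))]
  push_cast
  ring

private lemma PP_key (n : ℕ) (rho : ℝ) (hρ : 0 < rho) (m : ℕ) (hm : m + 1 ≤ n) :
    (((m : ℝ) + 1) + ((n : ℝ) - ((m : ℝ) + 1)) * rho) * PP n rho (m + 1)
      = rho * ((n : ℝ) - (m : ℝ)) * PP n rho m := by
  have h1 : ((m : ℝ) + 1) ≤ (n : ℝ) := by exact_mod_cast hm
  have hd : 0 < ((m : ℝ) + 1) + ((n : ℝ) - ((m : ℝ) + 1)) * rho := by nlinarith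
  rw [PP_succ]
  field_simp
  ring

private lemma PP_tel (n : ℕ) (rho : ℝ) (hρ : 0 < rho) :
    ∀ m, m ≤ n → ∑ k ∈ Finset.Icc 1 m, (k : ℝ) * PP n rho k
      = rho * ((n : ℝ) - ((n : ℝ) - (m : ℝ)) * PP n rho m)
  | 0, _ => by simp [PP_zero]
  | (m + 1), hm => by
      rw [Finset.sum_Icc_succ_top (Nat.succ_le_succ (Nat.zero_le m)),
        PP_tel n rho hρ m (by omega)]
      have hk := PP_key n rho hρ m hm
      push_cast
      linear_combination hk

private lemma PP_dsum (n : ℕ) (rho : ℝ) :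
    ∀ m, ∑ j ∈ Finset.Icc 1 m, (∑ k ∈ Finset.range j, PP n rho k)
      = ∑ k ∈ Finset.range m, ((m : ℝ) - (k : ℝ)) * PP n rho k
  | 0 => by simp
  | (m + 1) => by
      rw [Finset.sum_Icc_succ_top (Nat.succ_le_succ (Nat.zero_le m)), PP_dsum n rho m,
        Finset.sum_range_succ, Finset.sum_range_succ]
      have hc : ∑ x ∈ Finset.range m, (((m + 1 : ℕ) : ℝ) - (x : ℝ)) * PP n rho x
          = ∑ x ∈ Finset.range m, (((m : ℝ) - (x : ℝ)) * PP n rho x + PP n rho x) := by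
        refine Finset.sum_congr rfl fun k _ => ?_
        push_cast
        ring
      rw [hc, Finset.sum_add_distrib]
      push_cast
      ring

private noncomputable def ff (n : ℕ) (lam rho : ℝ) (j : ℕ) : ℝ :=
  (1 / ((n : ℝ) * lam)) * ∑ k ∈ Finset.range j, PP n rho k

private lemma E_lemma (n : ℕ) (rho : ℝ) (hρ : 0 < rho) :
    ∀ m : ℕ, m + 1 ≤ n →
      (((n : ℝ) - ((m : ℝ) + 1) + 1) * rho + (m : ℝ)) * (∑ k ∈ Finset.range (m + 1), PP n rho k)
        = (n : ℝ) * rho + ∑ j ∈ Finset.Icc 1 m, (∑ k ∈ Finset.range j, PP n rho k)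
          + rho * ((n : ℝ) - (m : ℝ)) * (∑ k ∈ Finset.range m, PP n rho k)
  | 0, h => by
      simp [PP_zero]
  | (m + 1), h => by
      have h' : m + 1 ≤ n := by omega
      have ih := E_lemma n rho hρ m h'
      have hk := PP_key n rho hρ m h'
      rw [Finset.sum_Icc_succ_top (Nat.succ_le_succ (Nat.zero_le m))]
      simp only [Finset.sum_range_succ] at ih ⊢
      push_cast at ih ⊢
      linear_combination ih + hk

private lemma V_lemma (n : ℕ) (lam mu rho : ℝ) (hl : 0 < lam) (hm : 0 < mu)
    (hρ : 0 < rho) (hlm : lam = rho * mu) (hnR : (0 : ℝ) < (n : ℝ)) (v : ℕ → ℝ)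
    (h1 : v 1 = 1 / ((n : ℝ) * lam))
    (h2 : ∀ i : ℕ, 2 ≤ i → i ≤ n →
      (((n : ℝ) - (i : ℝ) + 1) * lam + ((i : ℝ) - 1) * mu) * v i
        = 1 + mu * ∑ j ∈ Finset.Icc 1 (i - 1), v j
          + lam * ((n : ℝ) - (i : ℝ) + 1) * v (i - 1)) :
    ∀ i, 1 ≤ i → i ≤ n →
      v i = ff n lam rho i ∧
        ∑ j ∈ Finset.Icc 1 i, v j = ∑ j ∈ Finset.Icc 1 i, ff n lam rho j := by
  have hlam0 : lam ≠ 0 := hl.ne'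
  have hn' : (n : ℝ) ≠ 0 := hnR.ne'
  intro i hi
  induction i, hi using Nat.le_induction with
  | base =>
      intro hn
      have hv1 : v 1 = ff n lam rho 1 := by
        rw [h1, ff, Finset.sum_range_one, PP_zero, mul_one]
      exact ⟨hv1, by simp [hv1]⟩
  | succ i hi ih =>
      intro hin
      obtain ⟨hv, hs⟩ := ih (by omega)
      have hE := E_lemma n rho hρ i hin
      have h2' := h2 (i + 1) (by omega) hin
      rw [Nat.add_sub_cancel, hs, hv] at h2'
      have hcast : ((i + 1 : ℕ) : ℝ) = (i : ℝ) + 1 := by push_cast; ring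
      rw [hcast] at h2'
      have hsum : ∑ j ∈ Finset.Icc 1 i, ff n lam rho j
          = (1 / ((n : ℝ) * lam)) * ∑ j ∈ Finset.Icc 1 i, (∑ k ∈ Finset.range j, PP n rho k) := by
        rw [Finset.mul_sum]
        rfl
      have hone : mu * ((n : ℝ) * rho) / ((n : ℝ) * lam) = 1 := by
        rw [hlm]
        field_simp
      have hgoal : (((n : ℝ) - ((i : ℝ) + 1) + 1) * lam + ((i : ℝ) + 1 - 1) * mu)
            * ff n lam rho (i + 1)
          = 1 + mu * ∑ j ∈ Finset.Icc 1 i, ff n lam rho j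
            + lam * ((n : ℝ) - ((i : ℝ) + 1) + 1) * ff n lam rho i := by
        rw [hsum]
        simp only [ff]
        rw [hlm]
        rw [hlm] at hone
        linear_combination (mu / ((n : ℝ) * (rho * mu))) * hE + hone
      have hin' : ((i : ℝ) + 1) ≤ (n : ℝ) := by exact_mod_cast hin
      have hD : (0 : ℝ) < ((n : ℝ) - ((i : ℝ) + 1) + 1) * lam + ((i : ℝ) + 1 - 1) * mu := by
        have h1' : (0 : ℝ) ≤ (i : ℝ) * mu := by positivity
        nlinarith
      have hveq : v (i + 1) = ff n lam rho (i + 1) :=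
        mul_left_cancel₀ hD.ne' (by rw [h2', hgoal])
      refine ⟨hveq, ?_⟩
      rw [Finset.sum_Icc_succ_top (Nat.succ_le_succ (Nat.zero_le i)),
        Finset.sum_Icc_succ_top (Nat.succ_le_succ (Nat.zero_le i)), hs, hveq]

/-- Average AoI for the homogeneous single-source n-server LCFS network (Theorem 1). -/
theorem stmt_3 (n : ℕ) (hn : 1 ≤ n) (lam mu : ℝ) (hl : 0 < lam) (hm : 0 < mu)
    (rho : ℝ) (hrho : rho = lam / mu) (v : ℕ → ℝ)
    (h1 : v 1 = 1 / ((n : ℝ) * lam))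
    (h2 : ∀ i : ℕ, 2 ≤ i → i ≤ n →
      (((n : ℝ) - (i : ℝ) + 1) * lam + ((i : ℝ) - 1) * mu) * v i
        = 1 + mu * ∑ j ∈ Finset.Icc 1 (i - 1), v j
          + lam * ((n : ℝ) - (i : ℝ) + 1) * v (i - 1))
    (h0 : v 0 = 1 / ((n : ℝ) * mu) + (1 / (n : ℝ)) * ∑ j ∈ Finset.Icc 1 n, v j) :
    v 0 = (1 / mu) *
      ((1 / ((n : ℝ) * rho)) * ∑ j ∈ Finset.Icc 1 (n - 1),
          ∏ i ∈ Finset.Icc 1 j,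
            rho * ((n : ℝ) - (i : ℝ) + 1) / ((i : ℝ) + ((n : ℝ) - (i : ℝ)) * rho)
        + 1 / ((n : ℝ) * rho)
        + (1 / ((n : ℝ) ^ 2)) * ∏ i ∈ Finset.Icc 1 (n - 1),
            rho * ((n : ℝ) - (i : ℝ) + 1) / ((i : ℝ) + ((n : ℝ) - (i : ℝ)) * rho)) := by
  have hρ : 0 < rho := by rw [hrho]; positivity
  have hlm : lam = rho * mu := by rw [hrho]; field_simp
  have hnR : (0 : ℝ) < (n : ℝ) := by exact_mod_cast hn
  -- goal in terms of PP
  have hPgoal : ∀ j : ℕ, (∏ i ∈ Finset.Icc 1 j,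
      rho * ((n : ℝ) - (i : ℝ) + 1) / ((i : ℝ) + ((n : ℝ) - (i : ℝ)) * rho)) = PP n rho j :=
    fun j => rfl
  -- sum of v equals sum of ff
  have hV := (V_lemma n lam mu rho hl hm hρ hlm hnR v h1 h2 n hn le_rfl).2
  rw [hV] at h0
  -- evaluate the ff sum
  have hffsum : ∑ j ∈ Finset.Icc 1 n, ff n lam rho j
      = (1 / ((n : ℝ) * lam)) * ∑ j ∈ Finset.Icc 1 n, (∑ k ∈ Finset.range j, PP n rho k) := by
    rw [Finset.mul_sum]
    rfl
  rw [hffsum, PP_dsum n rho n] at h0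
  -- split the weighted sum
  have hsplit : ∑ k ∈ Finset.range n, ((n : ℝ) - (k : ℝ)) * PP n rho k
      = (n : ℝ) * ∑ k ∈ Finset.range n, PP n rho k
        - ∑ k ∈ Finset.range n, (k : ℝ) * PP n rho k := by
    rw [Finset.mul_sum, ← Finset.sum_sub_distrib]
    exact Finset.sum_congr rfl fun k _ => by ring
  rw [hsplit] at h0
  -- range n sums in terms of Icc 1 (n-1)
  have hIco : Finset.Ico 1 n = Finset.Icc 1 (n - 1) := by
    have h := Finset.Ico_add_one_right_eq_Icc 1 (n - 1)
    rwa [Nat.sub_add_cancel hn] at h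
  have hr1 : ∑ k ∈ Finset.range n, PP n rho k
      = 1 + ∑ k ∈ Finset.Icc 1 (n - 1), PP n rho k := by
    rw [Finset.range_eq_Ico, Finset.sum_eq_sum_Ico_succ_bot (by omega), PP_zero, hIco]
  have hr2 : ∑ k ∈ Finset.range n, (k : ℝ) * PP n rho k
      = ∑ k ∈ Finset.Icc 1 (n - 1), (k : ℝ) * PP n rho k := by
    rw [Finset.range_eq_Ico, Finset.sum_eq_sum_Ico_succ_bot (by omega), hIco]
    simp
  have htel := PP_tel n rho hρ (n - 1) (by omega)
  have hcast : ((n - 1 : ℕ) : ℝ) = (n : ℝ) - 1 := by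
    rw [Nat.cast_sub hn, Nat.cast_one]
  rw [hcast] at htel
  rw [hr1, hr2, htel] at h0
  rw [h0, hlm]
  simp only [hPgoal]
  have hμ : mu ≠ 0 := hm.ne'
  have hρ' : rho ≠ 0 := hρ.ne'
  have hn' : (n : ℝ) ≠ 0 := hnR.ne'
  field_simp
  ring
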